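/- Let 1 ≤ d < n be integers, let P ∈ ℝ^{d×n} have invertible leading d×d block P_I, set Q := P_I^{-1} P_II, and let α ≥ β ≥ 0. Then there exists a constant C > 0, independent of the coefficient family, such that for every family c : ℤ^n → ℂ, (Σ_{k∈ℤ^n} ‖P k‖^{2α} |c_k|²)^{1/2} + (Σ_{k∈ℤ^n} ‖k‖^{2β} |c_k|²)^{1/2} ≤ C (Σ_{k∈ℤ^n} (‖k_I + Q k_II‖^{2α} + ‖k_II‖^{2β}) |c_k|²)^{1/2} (equality of both sides being ∞ allowed). -/

import Mathlib

open scoped ENNReal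

/-- Euclidean norm of a vector in `ℝ^m`. -/
noncomputable def euclNorm {m : ℕ} (x : Fin m → ℝ) : ℝ :=
  ‖(EuclideanSpace.equiv (Fin m) ℝ).symm x‖

/-- Mixed weight `‖k_I + Q k_II‖^(2α) + ‖k_II‖^(2β)` (real powers, `0⁰ = 1`). -/
noncomputable def wMix (d m : ℕ) (Q : Matrix (Fin d) (Fin m) ℝ) (α β : ℝ)
    (k : Fin (d + m) → ℤ) : ℝ :=
  euclNorm ((fun i => (k (Fin.castAdd m i) : ℝ)) +
      Q.mulVec fun j => (k (Fin.natAdd d j) : ℝ)) ^ (2 * α) +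
    euclNorm (fun j => (k (Fin.natAdd d j) : ℝ)) ^ (2 * β)

/-- Weight `‖P k‖^(2α)`. -/
noncomputable def wP (d m : ℕ) (P : Matrix (Fin d) (Fin (d + m)) ℝ) (α : ℝ)
    (k : Fin (d + m) → ℤ) : ℝ :=
  euclNorm (P.mulVec fun i => (k i : ℝ)) ^ (2 * α)

/-- Weight `‖k‖^(2β)`. -/
noncomputable def wFull (d m : ℕ) (β : ℝ) (k : Fin (d + m) → ℤ) : ℝ :=
  euclNorm (fun i => (k i : ℝ)) ^ (2 * β)

lemma euclNorm_nonneg {m : ℕ} (x : Fin m → ℝ) : 0 ≤ euclNorm x := norm_nonneg _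

lemma euclNorm_add_le {m : ℕ} (x y : Fin m → ℝ) :
    euclNorm (x + y) ≤ euclNorm x + euclNorm y := by
  unfold euclNorm
  rw [map_add]
  exact norm_add_le _ _

lemma euclNorm_neg {m : ℕ} (x : Fin m → ℝ) : euclNorm (-x) = euclNorm x := by
  unfold euclNorm
  rw [map_neg, norm_neg]

lemma euclNorm_zero {m : ℕ} : euclNorm (0 : Fin m → ℝ) = 0 := by
  unfold euclNorm
  rw [map_zero, norm_zero]

section mv
open scoped Matrix.Norms.L2Operator

lemma exists_mulVec_bound {a b : ℕ} (A : Matrix (Fin a) (Fin b) ℝ) :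
    ∃ c : ℝ, 0 ≤ c ∧ ∀ y : Fin b → ℝ, euclNorm (A.mulVec y) ≤ c * euclNorm y :=
  ⟨‖A‖, norm_nonneg A, fun y =>
    A.l2_opNorm_mulVec ((EuclideanSpace.equiv (Fin b) ℝ).symm y)⟩

end mv

lemma euclNorm_eq {m : ℕ} (x : Fin m → ℝ) :
    euclNorm x = Real.sqrt (∑ i, x i ^ 2) := by
  unfold euclNorm
  rw [EuclideanSpace.norm_eq]
  congr 1
  refine Finset.sum_congr rfl fun i _ => ?_
  rw [Real.norm_eq_abs, sq_abs]
  rfl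

lemma abs_le_euclNorm {m : ℕ} (x : Fin m → ℝ) (i : Fin m) : |x i| ≤ euclNorm x := by
  rw [euclNorm_eq, ← Real.sqrt_sq_eq_abs]
  apply Real.sqrt_le_sqrt
  exact Finset.single_le_sum (fun j _ => sq_nonneg (x j)) (Finset.mem_univ i)

lemma euclNorm_int_lt_one {a : ℕ} (z : Fin a → ℤ)
    (h : euclNorm (fun i => (z i : ℝ)) < 1) : ∀ i, z i = 0 := by
  intro i
  by_contra hz
  have h1 : (1 : ℝ) ≤ |(z i : ℝ)| := by
    rw [← Int.cast_abs]
    exact_mod_cast Int.one_le_abs hz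
  have h2 := abs_le_euclNorm (fun i => (z i : ℝ)) i
  linarith

lemma sqrt_add_le' (a b : ℝ) (ha : 0 ≤ a) (hb : 0 ≤ b) :
    Real.sqrt (a + b) ≤ Real.sqrt a + Real.sqrt b := by
  have h1 := Real.sq_sqrt ha
  have h2 := Real.sq_sqrt hb
  have h3 := Real.sqrt_nonneg a
  have h4 := Real.sqrt_nonneg b
  nlinarith [Real.sqrt_nonneg (a+b), Real.sq_sqrt (by linarith : (0:ℝ) ≤ a + b)]

lemma euclNorm_split_le (d m : ℕ) (x : Fin (d + m) → ℝ) :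
    euclNorm x ≤ euclNorm (fun i => x (Fin.castAdd m i)) +
      euclNorm (fun j => x (Fin.natAdd d j)) := by
  simp only [euclNorm_eq]
  rw [Fin.sum_univ_add]
  exact sqrt_add_le' _ _ (Finset.sum_nonneg fun _ _ => sq_nonneg _)
    (Finset.sum_nonneg fun _ _ => sq_nonneg _)

set_option maxHeartbeats 1000000 in
/-- `|u|_α + |U|_{H^β} ≤ C |u|_{α,β}` for all coefficient families
`c : ℤ^n → ℂ` (value `∞` allowed on both sides). -/
theorem stmt3 (d m : ℕ) (hd : 1 ≤ d) (hm : 1 ≤ m)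
    (P : Matrix (Fin d) (Fin (d + m)) ℝ)
    (PI : Matrix (Fin d) (Fin d) ℝ) (hPI : PI = P.submatrix id (Fin.castAdd m))
    (PII : Matrix (Fin d) (Fin m) ℝ) (hPII : PII = P.submatrix id (Fin.natAdd d))
    (hinv : IsUnit PI)
    (Q : Matrix (Fin d) (Fin m) ℝ) (hQ : Q = PI⁻¹ * PII)
    (α β : ℝ) (hβ : 0 ≤ β) (hαβ : β ≤ α) :
    ∃ C : ℝ, 0 < C ∧ ∀ c : (Fin (d + m) → ℤ) → ℂ,
      (∑' k : Fin (d + m) → ℤ, ENNReal.ofReal (wP d m P α k * ‖c k‖ ^ 2)) ^ ((1 : ℝ) / 2) +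
        (∑' k : Fin (d + m) → ℤ, ENNReal.ofReal (wFull d m β k * ‖c k‖ ^ 2)) ^ ((1 : ℝ) / 2) ≤
      ENNReal.ofReal C *
        (∑' k : Fin (d + m) → ℤ,
            ENNReal.ofReal (wMix d m Q α β k * ‖c k‖ ^ 2)) ^ ((1 : ℝ) / 2) := by
  have hα : 0 ≤ α := hβ.trans hαβ
  -- notation
  set vI : (Fin (d + m) → ℤ) → (Fin d → ℝ) :=
    fun k i => (k (Fin.castAdd m i) : ℝ) with hvI
  set vII : (Fin (d + m) → ℤ) → (Fin m → ℝ) :=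
    fun k j => (k (Fin.natAdd d j) : ℝ) with hvII
  have hdet : IsUnit PI.det := (Matrix.isUnit_iff_isUnit_det PI).mp hinv
  have hPIQ : PI * Q = PII := by
    rw [hQ, Matrix.mul_nonsing_inv_cancel_left _ _ hdet]
  -- decomposition of P.mulVec
  have hPdec : ∀ k : Fin (d + m) → ℤ,
      P.mulVec (fun i => (k i : ℝ)) = PI.mulVec (vI k + Q.mulVec (vII k)) := by
    intro k
    rw [Matrix.mulVec_add, Matrix.mulVec_mulVec, hPIQ]
    funext i
    simp only [Matrix.mulVec, dotProduct, hPI, hPII, Matrix.submatrix_apply, id,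
      Pi.add_apply, hvI, hvII]
    rw [Fin.sum_univ_add]
  obtain ⟨cP, hcP0, hcP⟩ := exists_mulVec_bound PI
  obtain ⟨cQ, hcQ0, hcQ⟩ := exists_mulVec_bound Q
  set v : (Fin (d + m) → ℤ) → ℝ := fun k => euclNorm (vI k + Q.mulVec (vII k)) with hv
  set w : (Fin (d + m) → ℤ) → ℝ := fun k => euclNorm (vII k) with hw
  have hv0 : ∀ k, 0 ≤ v k := fun k => euclNorm_nonneg _
  have hw0 : ∀ k, 0 ≤ w k := fun k => euclNorm_nonneg _
  have hMix : ∀ k, wMix d m Q α β k = v k ^ (2*α) + w k ^ (2*β) := fun k => rfl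
  have hMix0 : ∀ k, 0 ≤ wMix d m Q α β k := by
    intro k
    rw [hMix]
    exact add_nonneg (Real.rpow_nonneg (hv0 k) _) (Real.rpow_nonneg (hw0 k) _)
  -- bound 1 : wP
  set K₁ : ℝ := (max 1 cP) ^ (2*α) with hK₁
  have hK₁1 : 0 ≤ K₁ := Real.rpow_nonneg (le_trans zero_le_one (le_max_left _ _)) _
  have hb1 : ∀ k, wP d m P α k ≤ K₁ * wMix d m Q α β k := by
    intro k
    have h1 : euclNorm (P.mulVec fun i => (k i : ℝ)) ≤ max 1 cP * v k := by
      rw [hPdec k]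
      exact (hcP _).trans (mul_le_mul_of_nonneg_right (le_max_right _ _) (hv0 k))
    have h2 : wP d m P α k ≤ (max 1 cP * v k) ^ (2*α) :=
      Real.rpow_le_rpow (euclNorm_nonneg _) h1 (by linarith)
    rw [Real.mul_rpow (le_trans zero_le_one (le_max_left _ _)) (hv0 k)] at h2
    refine h2.trans ?_
    rw [hMix]
    have := Real.rpow_nonneg (hw0 k) (2*β)
    nlinarith [Real.rpow_nonneg (hv0 k) (2*α)]
  -- key integer inequality : v^(2β) ≤ v^(2α) + w^(2β)
  have hkey : ∀ k, v k ^ (2*β) ≤ v k ^ (2*α) + w k ^ (2*β) := by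
    intro k
    by_cases h1 : 1 ≤ v k
    · have := Real.rpow_le_rpow_of_exponent_le h1 (by linarith : 2*β ≤ 2*α)
      have := Real.rpow_nonneg (hw0 k) (2*β)
      linarith
    · push_neg at h1
      by_cases h2 : 1 ≤ w k
      · have ha : v k ^ (2*β) ≤ 1 := Real.rpow_le_one (hv0 k) h1.le (by linarith)
        have hb : (1:ℝ) = (1:ℝ) ^ (2*β) := (Real.one_rpow _).symm
        have hc : (1:ℝ) ^ (2*β) ≤ w k ^ (2*β) :=
          Real.rpow_le_rpow zero_le_one h2 (by linarith)
        have := Real.rpow_nonneg (hv0 k) (2*α)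
        linarith [hb ▸ hc]
      · push_neg at h2
        have hII : ∀ j, k (Fin.natAdd d j) = 0 :=
          euclNorm_int_lt_one (fun j => k (Fin.natAdd d j)) h2
        have hvII0 : vII k = 0 := by
          funext j
          simp [hvII, hII j]
        have hveq : v k = euclNorm (vI k) := by
          rw [hv]
          simp [hvII0]
        have hI : ∀ i, k (Fin.castAdd m i) = 0 := by
          apply euclNorm_int_lt_one (fun i => k (Fin.castAdd m i))
          rw [← hveq]  -- careful: euclNorm (fun i => ((k (castAdd m i)):ℝ)) = euclNorm (vI k)
          exact h1
        have hvI0 : vI k = 0 := by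
          funext i
          simp [hvI, hI i]
        have hv00 : v k = 0 := by rw [hveq, hvI0, euclNorm_zero]
        have hw00 : w k = 0 := by
          show euclNorm (vII k) = 0
          rw [hvII0, euclNorm_zero]
        rw [hv00, hw00]
        have := Real.rpow_nonneg (le_refl (0:ℝ)) (2*α)
        linarith
  -- bound 2 : wFull
  set M : ℝ := max 1 (cQ + 1) with hM
  have hM1 : (1:ℝ) ≤ M := le_max_left _ _
  set K₂ : ℝ := M ^ (2*β) * (2:ℝ) ^ (2*β) * 2 with hK₂
  have hK₂0 : 0 ≤ K₂ := by
    have := Real.rpow_nonneg (by linarith : (0:ℝ) ≤ M) (2*β)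
    have := Real.rpow_nonneg (by norm_num : (0:ℝ) ≤ 2) (2*β)
    positivity
  have hb2 : ∀ k, wFull d m β k ≤ K₂ * wMix d m Q α β k := by
    intro k
    have hsplit : euclNorm (fun i => (k i : ℝ)) ≤ euclNorm (vI k) + w k :=
      euclNorm_split_le d m _
    have hvIle : euclNorm (vI k) ≤ v k + cQ * w k := by
      have : vI k = (vI k + Q.mulVec (vII k)) + (-(Q.mulVec (vII k))) := by ring
      calc euclNorm (vI k) = euclNorm ((vI k + Q.mulVec (vII k)) + (-(Q.mulVec (vII k)))) := by
            rw [← this]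
        _ ≤ v k + euclNorm (-(Q.mulVec (vII k))) := euclNorm_add_le _ _
        _ = v k + euclNorm (Q.mulVec (vII k)) := by rw [euclNorm_neg]
        _ ≤ v k + cQ * w k := by linarith [hcQ (vII k)]
    have hfull : euclNorm (fun i => (k i : ℝ)) ≤ M * (v k + w k) := by
      have h1 : euclNorm (fun i => (k i : ℝ)) ≤ v k + (cQ + 1) * w k := by linarith
      have h2 : v k + (cQ + 1) * w k ≤ M * v k + M * w k := by
        have := le_max_right 1 (cQ + 1)
        nlinarith [hv0 k, hw0 k, hM1]
      linarith [mul_add M (v k) (w k)]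
    have hstep : wFull d m β k ≤ (M * (v k + w k)) ^ (2*β) :=
      Real.rpow_le_rpow (euclNorm_nonneg _) hfull (by linarith)
    have hM0 : (0:ℝ) ≤ M := by linarith
    rw [Real.mul_rpow hM0 (add_nonneg (hv0 k) (hw0 k))] at hstep
    -- (v+w)^(2β) ≤ 2^(2β) (v^2β + w^2β)
    have hvw : (v k + w k) ^ (2*β) ≤ (2:ℝ) ^ (2*β) * (v k ^ (2*β) + w k ^ (2*β)) := by
      have hmax : v k + w k ≤ 2 * max (v k) (w k) := by
        rcases le_total (v k) (w k) with h | h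
        · rw [max_eq_right h]; linarith
        · rw [max_eq_left h]; linarith
      have h1 : (v k + w k) ^ (2*β) ≤ (2 * max (v k) (w k)) ^ (2*β) :=
        Real.rpow_le_rpow (add_nonneg (hv0 k) (hw0 k)) hmax (by linarith)
      rw [Real.mul_rpow (by norm_num) (le_max_of_le_left (hv0 k))] at h1
      have h2 : max (v k) (w k) ^ (2*β) ≤ v k ^ (2*β) + w k ^ (2*β) := by
        rcases le_total (v k) (w k) with h | h
        · rw [max_eq_right h]
          linarith [Real.rpow_nonneg (hv0 k) (2*β)]
        · rw [max_eq_left h]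
          linarith [Real.rpow_nonneg (hw0 k) (2*β)]
      have h20 : (0:ℝ) ≤ (2:ℝ) ^ (2*β) := Real.rpow_nonneg (by norm_num) _
      nlinarith
    have hsum : v k ^ (2*β) + w k ^ (2*β) ≤ 2 * wMix d m Q α β k := by
      rw [hMix]
      have := hkey k
      have := Real.rpow_nonneg (hw0 k) (2*β)
      have := Real.rpow_nonneg (hv0 k) (2*α)
      linarith
    have hM2β0 : (0:ℝ) ≤ M ^ (2*β) := Real.rpow_nonneg hM0 _
    have h20 : (0:ℝ) ≤ (2:ℝ) ^ (2*β) := Real.rpow_nonneg (by norm_num) _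
    calc wFull d m β k ≤ M ^ (2*β) * (v k + w k) ^ (2*β) := hstep
      _ ≤ M ^ (2*β) * ((2:ℝ) ^ (2*β) * (v k ^ (2*β) + w k ^ (2*β))) := by
          exact mul_le_mul_of_nonneg_left hvw hM2β0
      _ ≤ M ^ (2*β) * ((2:ℝ) ^ (2*β) * (2 * wMix d m Q α β k)) := by
          apply mul_le_mul_of_nonneg_left _ hM2β0
          exact mul_le_mul_of_nonneg_left hsum h20
      _ = K₂ * wMix d m Q α β k := by rw [hK₂]; ring
  -- final constant
  set C' : ℝ := max K₁ K₂ + 1 with hC'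
  have hC'1 : 1 ≤ C' := by
    have : (0:ℝ) ≤ max K₁ K₂ := le_max_of_le_left hK₁1
    linarith
  have hC'0 : 0 < C' := by linarith
  have hb1' : ∀ k, wP d m P α k ≤ C' * wMix d m Q α β k := by
    intro k
    refine (hb1 k).trans ?_
    apply mul_le_mul_of_nonneg_right _ (hMix0 k)
    have := le_max_left K₁ K₂
    linarith
  have hb2' : ∀ k, wFull d m β k ≤ C' * wMix d m Q α β k := by
    intro k
    refine (hb2 k).trans ?_
    apply mul_le_mul_of_nonneg_right _ (hMix0 k)
    have := le_max_right K₁ K₂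
    linarith
  refine ⟨2 * C', by linarith, fun c => ?_⟩
  set S : ℝ≥0∞ := ∑' k : Fin (d + m) → ℤ, ENNReal.ofReal (wMix d m Q α β k * ‖c k‖ ^ 2) with hS
  have hbound : ∀ (W : (Fin (d + m) → ℤ) → ℝ),
      (∀ k, W k ≤ C' * wMix d m Q α β k) →
      (∑' k : Fin (d + m) → ℤ, ENNReal.ofReal (W k * ‖c k‖ ^ 2)) ≤ ENNReal.ofReal C' * S := by
    intro W hW
    have h1 : (∑' k : Fin (d + m) → ℤ, ENNReal.ofReal (W k * ‖c k‖ ^ 2)) ≤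
        ∑' k : Fin (d + m) → ℤ, ENNReal.ofReal (C' * (wMix d m Q α β k * ‖c k‖ ^ 2)) := by
      apply ENNReal.tsum_le_tsum
      intro k
      apply ENNReal.ofReal_le_ofReal
      rw [← mul_assoc]
      exact mul_le_mul_of_nonneg_right (hW k) (sq_nonneg _)
    refine h1.trans ?_
    simp_rw [ENNReal.ofReal_mul hC'0.le]
    rw [ENNReal.tsum_mul_left]
  have hhalf : ∀ x : ℝ≥0∞, x ≤ ENNReal.ofReal C' * S →
      x ^ ((1:ℝ)/2) ≤ ENNReal.ofReal C' * S ^ ((1:ℝ)/2) := by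
    intro x hx
    have h1 : x ^ ((1:ℝ)/2) ≤ (ENNReal.ofReal C' * S) ^ ((1:ℝ)/2) :=
      ENNReal.rpow_le_rpow hx (by norm_num)
    rw [ENNReal.mul_rpow_of_nonneg _ _ (by norm_num : (0:ℝ) ≤ 1/2)] at h1
    refine h1.trans (mul_le_mul_of_nonneg_right ?_ ?_)
    · have hge1 : (1:ℝ≥0∞) ≤ ENNReal.ofReal C' := by
        rw [← ENNReal.ofReal_one]
        exact ENNReal.ofReal_le_ofReal hC'1
      calc (ENNReal.ofReal C') ^ ((1:ℝ)/2) ≤ (ENNReal.ofReal C') ^ ((1:ℝ)) :=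
            ENNReal.rpow_le_rpow_of_exponent_le hge1 (by norm_num)
        _ = ENNReal.ofReal C' := ENNReal.rpow_one _
    · exact zero_le
  have hA := hhalf _ (hbound _ hb1')
  have hB := hhalf _ (hbound _ hb2')
  calc (∑' k : Fin (d + m) → ℤ, ENNReal.ofReal (wP d m P α k * ‖c k‖ ^ 2)) ^ ((1 : ℝ) / 2) +
        (∑' k : Fin (d + m) → ℤ, ENNReal.ofReal (wFull d m β k * ‖c k‖ ^ 2)) ^ ((1 : ℝ) / 2) ≤
      ENNReal.ofReal C' * S ^ ((1:ℝ)/2) + ENNReal.ofReal C' * S ^ ((1:ℝ)/2) :=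
        add_le_add hA hB
    _ = ENNReal.ofReal (2 * C') * S ^ ((1:ℝ)/2) := by
        rw [ENNReal.ofReal_mul (by norm_num : (0:ℝ) ≤ 2)]
        rw [show (ENNReal.ofReal 2) = 2 from by norm_num]
        ring
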